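/- Let ω be irrational with convergent denominator q = q_n, and let R ≥ 1. Then Σ_{1 ≤ |k| < q/4} 1/(1 + R²‖kω‖²) ≤ 2π q / R. -/

import Mathlib

/-- Distance from a real number to the nearest integer. -/
noncomputable def distInt (x : ℝ) : ℝ := |x - round x|

lemma distInt_le_abs_sub (x : ℝ) (n : ℤ) : distInt x ≤ |x - n| := by
  rcases eq_or_ne n (round x) with rfl | h
  · simp [distInt]
  · have h1 : (1 : ℝ) ≤ |(n : ℝ) - round x| := by
      rw [show ((n : ℝ) - round x) = ((n - round x : ℤ) : ℝ) by push_cast; ring]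
      rw [← Int.cast_abs]
      exact_mod_cast Int.one_le_abs (sub_ne_zero.mpr h)
    have h2 : |x - round x| ≤ 1 / 2 := abs_sub_round x
    have h3 : |(n : ℝ) - round x| ≤ |x - n| + |x - round x| := by
      calc |(n : ℝ) - round x| ≤ |(n : ℝ) - x| + |x - round x| := abs_sub_le _ _ _
        _ = |x - n| + |x - round x| := by rw [abs_sub_comm]
    simp only [distInt]
    linarith

lemma arctan_slope_lb {a b : ℝ} (ha : 0 ≤ a) (hab : a < b) :
    (b - a) / (1 + b ^ 2) ≤ Real.arctan b - Real.arctan a := by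
  obtain ⟨c, hc, hderiv⟩ := exists_hasDerivAt_eq_slope Real.arctan (fun x => 1 / (1 + x ^ 2)) hab
    Real.continuous_arctan.continuousOn (fun x _ => Real.hasDerivAt_arctan x)
  have hc1 : 0 < c := ha.trans_lt hc.1
  have hc2 : c ≤ b := hc.2.le
  have h1 : (1 : ℝ) / (1 + b ^ 2) ≤ 1 / (1 + c ^ 2) := by
    apply one_div_le_one_div_of_le (by positivity)
    nlinarith
  have hb : 0 < b - a := by linarith
  rw [eq_div_iff hb.ne'] at hderiv
  calc (b - a) / (1 + b ^ 2) = 1 / (1 + b ^ 2) * (b - a) := by ring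
    _ ≤ 1 / (1 + c ^ 2) * (b - a) := mul_le_mul_of_nonneg_right h1 hb.le
    _ = Real.arctan b - Real.arctan a := hderiv

lemma sum_lorentz_le (c : ℝ) (hc : 0 < c) (N : ℕ) :
    ∑ m ∈ Finset.Icc 1 N, 1 / (1 + c ^ 2 * (m : ℝ) ^ 2) ≤ Real.pi / (2 * c) := by
  have key : ∀ i : ℕ, 1 / (1 + c ^ 2 * ((i : ℝ) + 1) ^ 2)
      ≤ (Real.arctan (c * ((i : ℝ) + 1)) - Real.arctan (c * i)) / c := by
    intro i
    have h1 := arctan_slope_lb (a := c * i) (b := c * ((i : ℝ) + 1))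
      (by positivity) (by nlinarith [Nat.cast_nonneg (α := ℝ) i])
    rw [le_div_iff₀ hc]
    calc 1 / (1 + c ^ 2 * ((i : ℝ) + 1) ^ 2) * c
        = (c * ((i : ℝ) + 1) - c * i) / (1 + (c * ((i : ℝ) + 1)) ^ 2) := by
          field_simp; ring
      _ ≤ _ := h1
  have tele := Finset.sum_range_sub (fun i : ℕ => Real.arctan (c * i)) N
  calc ∑ m ∈ Finset.Icc 1 N, 1 / (1 + c ^ 2 * (m : ℝ) ^ 2)
      = ∑ i ∈ Finset.range N, 1 / (1 + c ^ 2 * ((1 + i : ℕ) : ℝ) ^ 2) := by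
        rw [show Finset.Icc 1 N = Finset.Ico 1 (N + 1) by rfl,
          Finset.sum_Ico_eq_sum_range]
        simp
    _ ≤ ∑ i ∈ Finset.range N,
        (Real.arctan (c * ((i : ℝ) + 1)) - Real.arctan (c * i)) / c := by
        apply Finset.sum_le_sum
        intro i _
        have := key i
        push_cast
        simpa only [add_comm (1:ℝ)] using this
    _ = Real.arctan (c * N) / c := by
        rw [← Finset.sum_div]
        congr 1
        push_cast at tele ⊢
        simpa using tele
    _ ≤ (Real.pi / 2) / c := by
        gcongr
        exact (Real.arctan_lt_pi_div_two _).le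
    _ = Real.pi / (2 * c) := by ring

theorem fejer_sum_small_freq (ω : ℝ) (hirr : Irrational ω) (q : ℕ) (hq : 1 ≤ q)
    (hmin : ∀ k : ℤ, k ≠ 0 → |k| < (q : ℤ) → 1 / (2 * (q : ℝ)) ≤ distInt ((k : ℝ) * ω))
    (hsep : ∀ k₁ k₂ : ℤ, k₁ ≠ k₂ → |k₁ - k₂| < (q : ℤ) →
      1 / (2 * (q : ℝ)) ≤ distInt (((k₁ : ℝ) - (k₂ : ℝ)) * ω))
    (R : ℝ) (hR : 1 ≤ R) :
    ∑ k ∈ (Finset.Icc (-(q : ℤ)) (q : ℤ)).filter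
        (fun k => 1 ≤ |k| ∧ 4 * |k| < (q : ℤ)),
      1 / (1 + R ^ 2 * distInt ((k : ℝ) * ω) ^ 2) ≤ 2 * Real.pi * (q : ℝ) / R := by
  have hq0 : (0 : ℝ) < q := by exact_mod_cast hq
  have hR0 : (0 : ℝ) < R := lt_of_lt_of_le one_pos hR
  set c : ℝ := R / (2 * q) with hc_def
  have hc : 0 < c := by positivity
  set S := (Finset.Icc (-(q : ℤ)) (q : ℤ)).filter
    (fun k => 1 ≤ |k| ∧ 4 * |k| < (q : ℤ)) with hS
  set θ : ℤ → ℝ := fun k => (k : ℝ) * ω - round ((k : ℝ) * ω) with hθ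
  have hdist : ∀ k : ℤ, distInt ((k : ℝ) * ω) = |θ k| := fun k => rfl
  -- facts for members of S
  have hmem : ∀ k ∈ S, k ≠ 0 ∧ 4 * |k| < (q : ℤ) := by
    intro k hk
    rw [hS, Finset.mem_filter] at hk
    refine ⟨fun h => by subst h; simp at hk, hk.2.2⟩
  have hlow : ∀ k ∈ S, 1 / (2 * (q : ℝ)) ≤ |θ k| := by
    intro k hk
    obtain ⟨hk0, hk4⟩ := hmem k hk
    rw [← hdist]
    exact hmin k hk0 (by omega)
  have hθne : ∀ k ∈ S, θ k ≠ 0 := by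
    intro k hk h
    have := hlow k hk
    rw [h, abs_zero] at this
    have : (0:ℝ) < 1 / (2 * q) := by positivity
    linarith
  -- the level map
  set m : ℤ → ℕ := fun k => ⌊2 * (q : ℝ) * |θ k|⌋₊ with hm
  have hm_le : ∀ k, (m k : ℝ) ≤ 2 * q * |θ k| := by
    intro k
    exact Nat.floor_le (by positivity)
  have hm_lt : ∀ k, 2 * (q : ℝ) * |θ k| < m k + 1 := fun k => Nat.lt_floor_add_one _
  have hm_ge : ∀ k ∈ S, 1 ≤ m k := by
    intro k hk
    have h := hlow k hk
    apply Nat.le_floor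
    rw [div_le_iff₀ (by positivity)] at h
    push_cast
    linarith
  have hm_top : ∀ k, m k ≤ q := by
    intro k
    have h2 : |θ k| ≤ 1 / 2 := abs_sub_round _
    have : 2 * (q : ℝ) * |θ k| ≤ q := by
      calc 2 * (q : ℝ) * |θ k| ≤ 2 * q * (1/2) := by
            apply mul_le_mul_of_nonneg_left h2 (by positivity)
        _ = q := by ring
    calc m k ≤ ⌊(q : ℝ)⌋₊ := Nat.floor_mono this
      _ = q := Nat.floor_natCast q
  -- injectivity
  set φ : ℤ → ℕ × Bool := fun k => (m k, decide (0 < θ k)) with hφ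
  have hinj : ∀ k₁ ∈ S, ∀ k₂ ∈ S, φ k₁ = φ k₂ → k₁ = k₂ := by
    intro k₁ hk₁ k₂ hk₂ heq
    by_contra hne
    have hmq : m k₁ = m k₂ := congrArg Prod.fst heq
    have hbq : decide (0 < θ k₁) = decide (0 < θ k₂) := congrArg Prod.snd heq
    -- same strict sign
    have hsign : (0 < θ k₁ ∧ 0 < θ k₂) ∨ (θ k₁ < 0 ∧ θ k₂ < 0) := by
      have h1 := hθne k₁ hk₁
      have h2 := hθne k₂ hk₂
      by_cases hp : 0 < θ k₁
      · left
        refine ⟨hp, ?_⟩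
        have : decide (0 < θ k₂) = true := by rw [← hbq]; simpa using hp
        simpa using this
      · right
        have hn1 : θ k₁ < 0 := lt_of_le_of_ne (not_lt.mp hp) h1
        refine ⟨hn1, ?_⟩
        have : decide (0 < θ k₂) = false := by rw [← hbq]; simpa using hp
        have := of_decide_eq_false this
        exact lt_of_le_of_ne (not_lt.mp this) h2
    -- |θ k₁ - θ k₂| < 1/(2q)
    have habs : |θ k₁ - θ k₂| < 1 / (2 * (q : ℝ)) := by
      have a1 := hm_le k₁
      have a2 := hm_lt k₁
      have b1 := hm_le k₂
      have b2 := hm_lt k₂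
      rw [hmq] at a1 a2
      have hdd : |(|θ k₁| - |θ k₂|)| < 1 / (2 * q) := by
        rw [abs_sub_lt_iff]
        constructor <;> (rw [lt_div_iff₀ (by positivity : (0:ℝ) < 2 * q)]; nlinarith)
      rcases hsign with ⟨h1, h2⟩ | ⟨h1, h2⟩
      · rwa [abs_of_pos h1, abs_of_pos h2] at hdd
      · rw [abs_of_neg h1, abs_of_neg h2] at hdd
        rwa [show -θ k₁ - -θ k₂ = -(θ k₁ - θ k₂) by ring, abs_neg] at hdd
    -- contradiction with hsep
    have hk1 := hmem k₁ hk₁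
    have hk2 := hmem k₂ hk₂
    have hlt : |k₁ - k₂| < (q : ℤ) := by
      have := abs_sub k₁ k₂
      omega
    have hs := hsep k₁ k₂ hne hlt
    have hle : distInt (((k₁ : ℝ) - (k₂ : ℝ)) * ω) ≤ |θ k₁ - θ k₂| := by
      have := distInt_le_abs_sub (((k₁ : ℝ) - (k₂ : ℝ)) * ω)
        (round ((k₁ : ℝ) * ω) - round ((k₂ : ℝ) * ω))
      convert this using 2
      push_cast
      simp only [hθ]
      ring
    linarith
  -- term bound
  have hterm : ∀ k ∈ S, 1 / (1 + R ^ 2 * distInt ((k : ℝ) * ω) ^ 2)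
      ≤ 1 / (1 + c ^ 2 * ((m k : ℝ)) ^ 2) := by
    intro k hk
    apply one_div_le_one_div_of_le (by positivity)
    have h1 : (m k : ℝ) / (2 * q) ≤ |θ k| := by
      rw [div_le_iff₀ (by positivity)]
      linarith [hm_le k]
    have h2 : c * (m k : ℝ) ≤ R * |θ k| := by
      rw [hc_def]
      rw [div_mul_eq_mul_div, div_le_iff₀ (by positivity)]
      calc R * (m k : ℝ) = R * (m k) := rfl
        _ ≤ R * (|θ k| * (2 * q)) := by
            apply mul_le_mul_of_nonneg_left ?_ hR0.le
            rw [div_le_iff₀ (by positivity)] at h1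
            linarith
        _ = R * |θ k| * (2 * q) := by ring
    have h3 : (c * (m k : ℝ)) ^ 2 ≤ (R * |θ k|) ^ 2 := by
      apply sq_le_sq' ?_ h2
      have : 0 ≤ c * (m k : ℝ) := by positivity
      nlinarith [abs_nonneg (θ k), mul_nonneg hR0.le (abs_nonneg (θ k))]
    rw [hdist]
    have : c ^ 2 * (m k : ℝ) ^ 2 ≤ R ^ 2 * |θ k| ^ 2 := by nlinarith
    linarith
  -- assemble
  have himg : S.image φ ⊆ Finset.Icc 1 q ×ˢ (Finset.univ : Finset Bool) := by
    intro p hp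
    rw [Finset.mem_image] at hp
    obtain ⟨k, hk, rfl⟩ := hp
    rw [Finset.mem_product]
    exact ⟨Finset.mem_Icc.mpr ⟨hm_ge k hk, hm_top k⟩, Finset.mem_univ _⟩
  calc ∑ k ∈ S, 1 / (1 + R ^ 2 * distInt ((k : ℝ) * ω) ^ 2)
      ≤ ∑ k ∈ S, 1 / (1 + c ^ 2 * ((m k : ℝ)) ^ 2) := Finset.sum_le_sum hterm
    _ = ∑ p ∈ S.image φ, 1 / (1 + c ^ 2 * ((p.1 : ℝ)) ^ 2) := by
        rw [Finset.sum_image hinj]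
    _ ≤ ∑ p ∈ Finset.Icc 1 q ×ˢ (Finset.univ : Finset Bool),
        1 / (1 + c ^ 2 * ((p.1 : ℝ)) ^ 2) := by
        apply Finset.sum_le_sum_of_subset_of_nonneg himg
        intro p _ _
        positivity
    _ = 2 * ∑ i ∈ Finset.Icc 1 q, 1 / (1 + c ^ 2 * ((i : ℝ)) ^ 2) := by
        rw [Finset.sum_product]
        simp [two_mul]
        rw [← Finset.sum_add_distrib]
    _ ≤ 2 * (Real.pi / (2 * c)) := by
        have := sum_lorentz_le c hc q
        linarith
    _ = 2 * Real.pi * (q : ℝ) / R := by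
        rw [hc_def]
        field_simp
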